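/- For every x > 0, ∫₀^∞ |3μ² - x²|/(μ² + x²)³ dμ = 9/(8√3 · x³). -/

import Mathlib

set_option maxHeartbeats 1000000


open MeasureTheory Real Set Filter Topology

theorem stmt_6 (x : ℝ) (hx : 0 < x) :
    ∫ μ in Set.Ioi (0 : ℝ), |3 * μ ^ 2 - x ^ 2| / (μ ^ 2 + x ^ 2) ^ 3
      = 9 / (8 * Real.sqrt 3 * x ^ 3) := by
  have hs3 : (0:ℝ) < Real.sqrt 3 := Real.sqrt_pos.2 (by norm_num)
  have hs3sq : Real.sqrt 3 ^ 2 = 3 := Real.sq_sqrt (by norm_num)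
  set a : ℝ := x / Real.sqrt 3 with ha_def
  have ha : 0 < a := div_pos hx hs3
  have ha2 : 3 * a ^ 2 = x ^ 2 := by
    rw [ha_def, div_pow, hs3sq]; field_simp
  have hden : ∀ μ : ℝ, (0:ℝ) < μ ^ 2 + x ^ 2 := fun μ => by positivity
  set g : ℝ → ℝ := fun μ => μ / (μ ^ 2 + x ^ 2) ^ 2 with hg_def
  have hderiv : ∀ μ : ℝ, HasDerivAt g ((x ^ 2 - 3 * μ ^ 2) / (μ ^ 2 + x ^ 2) ^ 3) μ := by
    intro μ
    have h1 : HasDerivAt (fun μ : ℝ => (μ ^ 2 + x ^ 2) ^ 2)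
        (2 * (μ ^ 2 + x ^ 2) ^ 1 * (2 * μ ^ 1)) μ := by
      exact (((hasDerivAt_pow 2 μ).add_const (x ^ 2)).pow 2)
    have h2 : HasDerivAt g _ μ := (hasDerivAt_id μ).div h1 (pow_ne_zero 2 (hden μ).ne')
    convert h2 using 1
    rw [div_eq_div_iff (by positivity) (by positivity)]
    simp only [id]
    ring
  have hgcont : Continuous g := by
    apply Continuous.div continuous_id (by continuity)
    exact fun μ => pow_ne_zero 2 (hden μ).ne'
  have hgtop : Tendsto g atTop (𝓝 0) := by
    have hb : Tendsto (fun μ : ℝ => (μ ^ 3)⁻¹) atTop (𝓝 0) :=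
      (tendsto_pow_atTop three_ne_zero).inv_tendsto_atTop
    refine squeeze_zero' ?_ ?_ hb
    · filter_upwards [eventually_ge_atTop (1:ℝ)] with μ hμ
      exact div_nonneg (by linarith) (by positivity)
    · filter_upwards [eventually_ge_atTop (1:ℝ)] with μ hμ
      have hμ0 : (0:ℝ) < μ := by linarith
      have h1 : g μ ≤ μ / (μ ^ 2) ^ 2 :=
        div_le_div_of_nonneg_left hμ0.le (by positivity) (by nlinarith)
      have h2 : μ / (μ ^ 2) ^ 2 = (μ ^ 3)⁻¹ := by
        field_simp
      linarith [h1, h2.le]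
  -- value of g at a
  have hga : g a = 9 / (16 * Real.sqrt 3 * x ^ 3) := by
    have hax : a ^ 2 + x ^ 2 = 4 * x ^ 2 / 3 := by nlinarith
    show a / (a ^ 2 + x ^ 2) ^ 2 = _
    rw [hax, ha_def, div_eq_div_iff (by positivity) (by positivity)]
    field_simp
    nlinarith [hs3sq, hs3]
  -- Ioi a part
  have hderivneg : ∀ μ ∈ Ioi a, HasDerivAt (fun μ => -g μ)
      ((3 * μ ^ 2 - x ^ 2) / (μ ^ 2 + x ^ 2) ^ 3) μ := by
    intro μ _
    have : HasDerivAt (fun μ => -g μ) _ μ := (hderiv μ).neg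
    convert this using 1
    rw [← neg_div]
    ring_nf
  have hnonneg : ∀ μ ∈ Ioi a, 0 ≤ (3 * μ ^ 2 - x ^ 2) / (μ ^ 2 + x ^ 2) ^ 3 := by
    intro μ hμ
    have : a < μ := hμ
    apply div_nonneg _ (by positivity)
    nlinarith
  have hcontneg : ContinuousWithinAt (fun μ => -g μ) (Set.Ici a) a := hgcont.neg.continuousWithinAt
  have htopneg : Tendsto (fun μ => -g μ) atTop (𝓝 0) := by
    simpa using hgtop.neg
  have hint2 : IntegrableOn (fun μ => (3 * μ ^ 2 - x ^ 2) / (μ ^ 2 + x ^ 2) ^ 3) (Ioi a) :=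
    integrableOn_Ioi_deriv_of_nonneg hcontneg hderivneg hnonneg htopneg
  have hval2 : ∫ μ in Ioi a, (3 * μ ^ 2 - x ^ 2) / (μ ^ 2 + x ^ 2) ^ 3 = g a := by
    rw [integral_Ioi_of_hasDerivAt_of_nonneg hcontneg hderivneg hnonneg htopneg]
    ring
  -- Ioc part
  have hval1 : ∫ μ in Ioc 0 a, (x ^ 2 - 3 * μ ^ 2) / (μ ^ 2 + x ^ 2) ^ 3 = g a := by
    rw [← intervalIntegral.integral_of_le ha.le]
    rw [intervalIntegral.integral_eq_sub_of_hasDerivAt (fun μ _ => hderiv μ)]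
    · simp [hg_def]
    · apply Continuous.intervalIntegrable
      apply Continuous.div (by continuity) (by continuity)
      exact fun μ => pow_ne_zero 3 (hden μ).ne'
  -- abs congruences
  have habs1 : ∀ μ ∈ Ioc (0:ℝ) a,
      |3 * μ ^ 2 - x ^ 2| / (μ ^ 2 + x ^ 2) ^ 3 = (x ^ 2 - 3 * μ ^ 2) / (μ ^ 2 + x ^ 2) ^ 3 := by
    intro μ hμ
    congr 1
    rw [abs_of_nonpos (by nlinarith [hμ.1, hμ.2])]
    ring
  have habs2 : ∀ μ ∈ Ioi a,
      |3 * μ ^ 2 - x ^ 2| / (μ ^ 2 + x ^ 2) ^ 3 = (3 * μ ^ 2 - x ^ 2) / (μ ^ 2 + x ^ 2) ^ 3 := by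
    intro μ hμ
    have : a < μ := hμ
    congr 1
    exact abs_of_nonneg (by nlinarith)
  have hfcont : Continuous (fun μ : ℝ => |3 * μ ^ 2 - x ^ 2| / (μ ^ 2 + x ^ 2) ^ 3) := by
    apply Continuous.div (by continuity) (by continuity)
    exact fun μ => pow_ne_zero 3 (hden μ).ne'
  have hint1 : IntegrableOn (fun μ : ℝ => |3 * μ ^ 2 - x ^ 2| / (μ ^ 2 + x ^ 2) ^ 3) (Ioc 0 a) :=
    hfcont.integrableOn_Ioc
  have hint2' : IntegrableOn (fun μ : ℝ => |3 * μ ^ 2 - x ^ 2| / (μ ^ 2 + x ^ 2) ^ 3) (Ioi a) :=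
    hint2.congr_fun (fun μ hμ => (habs2 μ hμ).symm) measurableSet_Ioi
  rw [← Ioc_union_Ioi_eq_Ioi ha.le,
    setIntegral_union (Ioc_disjoint_Ioi le_rfl) measurableSet_Ioi hint1 hint2',
    setIntegral_congr_fun measurableSet_Ioc habs1, setIntegral_congr_fun measurableSet_Ioi habs2,
    hval1, hval2, hga]
  rw [← add_div]
  rw [div_eq_div_iff (by positivity) (by positivity)]
  ring
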